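/- Let P, A, G, Q : ℝ → Matrix n n ℝ with P differentiable, P(t) symmetric and G(t) symmetric positive semidefinite for every t, and suppose the point-wise Riccati identity P(t)A(t) + A(t)ᵀP(t) − P(t)G(t)P(t) + Q(t) = 0 holds for all t. Set A_c := A − G P, and let x : ℝ → ℝⁿ be differentiable with x′(t) = A_c(t) x(t). Then W(t) := ⟨x(t), P(t)x(t)⟩ satisfies W′(t) = −⟨x(t), (Q(t) − P′(t)) x(t)⟩ − ⟨x(t), P(t)G(t)P(t)x(t)⟩ ≤ −⟨x(t), (Q(t) − P′(t)) x(t)⟩ for all t; in particular, if Q(t) − P′(t) is positive definite and x(t) ≠ 0, then W′(t) < 0. (Key inequality (22) in the proof of Theorem 2: the matrix condition Q − Ṗ ≻ 0 makes the Riccati solution a strict Lyapunov function for the closed-loop safety embedded system.) -/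

import Mathlib

open Matrix

/-- Key inequality (22) in the proof of Theorem 2: along closed-loop
trajectories `ẋ = (A − G P) x` of the safety embedded system, if `P(t)` solves
the point-wise Riccati equation `P A + Aᵀ P − P G P + Q = 0`, then
`W(t) = ⟨x, P x⟩` satisfies
`W′ = −⟨x, (Q − Ṗ)x⟩ − ⟨x, P G P x⟩ ≤ −⟨x, (Q − Ṗ)x⟩`; in particular, if
`Q − Ṗ ≻ 0` and `x(t) ≠ 0` then `W′(t) < 0`. -/
theorem riccati_lyapunov_key_inequality {n : ℕ}
    (P P' A G Q : ℝ → Matrix (Fin n) (Fin n) ℝ)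
    (hP : ∀ (t : ℝ) (i j : Fin n), HasDerivAt (fun s => P s i j) (P' t i j) t)
    (hPsymm : ∀ t : ℝ, (P t).IsSymm)
    (hGsymm : ∀ t : ℝ, (G t).IsSymm)
    (hGpsd : ∀ t : ℝ, (G t).PosSemidef)
    (hRic : ∀ t : ℝ, P t * A t + (A t)ᵀ * P t - P t * G t * P t + Q t = 0)
    (x : ℝ → (Fin n → ℝ))
    (hx : ∀ t : ℝ, HasDerivAt x ((A t - G t * P t).mulVec (x t)) t) :
    ∀ t : ℝ,
      HasDerivAt (fun s => x s ⬝ᵥ (P s).mulVec (x s))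
        (-(x t ⬝ᵥ (Q t - P' t).mulVec (x t))
          - x t ⬝ᵥ (P t * G t * P t).mulVec (x t)) t ∧
      (-(x t ⬝ᵥ (Q t - P' t).mulVec (x t))
          - x t ⬝ᵥ (P t * G t * P t).mulVec (x t)
        ≤ -(x t ⬝ᵥ (Q t - P' t).mulVec (x t))) ∧
      ((Q t - P' t).PosDef → x t ≠ 0 →
        -(x t ⬝ᵥ (Q t - P' t).mulVec (x t))
          - x t ⬝ᵥ (P t * G t * P t).mulVec (x t) < 0) := by
  intro t
  set d : Fin n → ℝ := (A t - G t * P t).mulVec (x t) with hd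
  have hxi : ∀ i, HasDerivAt (fun s => x s i) (d i) t := fun i =>
    hasDerivAt_pi.mp (hx t) i
  -- nonnegativity of the PGP quadratic form
  have hPGP : 0 ≤ x t ⬝ᵥ (P t * G t * P t).mulVec (x t) := by
    have hpsd := (hGpsd t).mul_mul_conjTranspose_same (P t)
    have hsym := (hPsymm t).eq
    rw [show (P t)ᴴ = P t by simpa using hsym] at hpsd
    have := hpsd.dotProduct_mulVec_nonneg (x t)
    simpa using this
  refine ⟨?_, by linarith, ?_⟩
  · -- the derivative computation
    have hsum : HasDerivAt (fun s => ∑ i, ∑ j, x s i * (P s i j * x s j))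
        (∑ i, ∑ j, (d i * (P t i j * x t j) + x t i * (P' t i j * x t j + P t i j * d j))) t := by
      apply HasDerivAt.fun_sum
      intro i _
      apply HasDerivAt.fun_sum
      intro j _
      exact (hxi i).mul ((hP t i j).mul (hxi j))
    have hfun : (fun s => x s ⬝ᵥ (P s).mulVec (x s))
        = fun s => ∑ i, ∑ j, x s i * (P s i j * x s j) := by
      funext s; simp [dotProduct, mulVec, Finset.mul_sum]
    rw [hfun]
    convert hsum using 1
    -- value equality
    have hval : (∑ i, ∑ j, (d i * (P t i j * x t j) + x t i * (P' t i j * x t j + P t i j * d j)))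
        = d ⬝ᵥ (P t).mulVec (x t) + (x t ⬝ᵥ (P' t).mulVec (x t) + x t ⬝ᵥ (P t).mulVec d) := by
      simp [dotProduct, mulVec, Finset.mul_sum, Finset.sum_add_distrib, mul_add]
    rw [hval]
    -- matrix identity from Riccati equation
    have hM : (A t - G t * P t)ᵀ * P t + P' t + P t * (A t - G t * P t)
        = -(Q t - P' t) - P t * G t * P t := by
      have hp := (hPsymm t).eq
      have hg := (hGsymm t).eq
      have key : (A t - G t * P t)ᵀ * P t + P' t + P t * (A t - G t * P t)
          - (-(Q t - P' t) - P t * G t * P t)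
          = P t * A t + (A t)ᵀ * P t - P t * G t * P t + Q t := by
        simp only [transpose_sub, transpose_mul, hp, hg, sub_mul, mul_sub, mul_assoc]
        abel
      exact sub_eq_zero.mp (key.trans (hRic t))
    -- translate vector expressions through the matrix identity
    have h1 : d ⬝ᵥ (P t).mulVec (x t) = x t ⬝ᵥ ((A t - G t * P t)ᵀ * P t).mulVec (x t) := by
      rw [hd, dotProduct_mulVec, dotProduct_mulVec, ← vecMul_vecMul, vecMul_transpose]
    have h2 : x t ⬝ᵥ (P t).mulVec d = x t ⬝ᵥ (P t * (A t - G t * P t)).mulVec (x t) := by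
      rw [hd, mulVec_mulVec]
    rw [h1, h2, ← dotProduct_add, ← dotProduct_add, ← add_mulVec, ← add_mulVec, ← add_assoc, hM]
    simp [sub_mulVec, neg_mulVec, dotProduct_sub, dotProduct_neg]
  · intro hQ hxne
    have h0 : 0 < x t ⬝ᵥ (Q t - P' t).mulVec (x t) := by
      have := hQ.dotProduct_mulVec_pos hxne
      simpa using this
    linarith
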